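/- Let F1 and F2 be finite subsets of ℤ² such that F1 is uniquely determined by its line sums and |F1| = |F2|. Put α = α(F1, F2). Then |F1 △ F2| ≤ 2α·√(2|F1|). -/

import Mathlib

open Finset

/-- The row sum `r_i(F)`: the number of elements of `F` in row `i`. -/
def rowSum (F : Finset (ℤ × ℤ)) (i : ℤ) : ℤ :=
  ((F.filter fun p => p.1 = i).card : ℤ)

/-- The column sum `c_j(F)`: the number of elements of `F` in column `j`. -/
def colSum (F : Finset (ℤ × ℤ)) (j : ℤ) : ℤ :=
  ((F.filter fun p => p.2 = j).card : ℤ)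

/-- `F` is uniquely determined by its line sums. -/
def uniquelyDetermined (F : Finset (ℤ × ℤ)) : Prop :=
  ∀ F' : Finset (ℤ × ℤ),
    (∀ i, rowSum F' i = rowSum F i) → (∀ j, colSum F' j = colSum F j) → F' = F

/-- `Σ_j |c_j(F1) − c_j(F2)| + Σ_i |r_i(F1) − r_i(F2)|`; the sums over all of `ℤ`
reduce to the finite index sets below, since all other terms vanish. -/
def lineDiff (F1 F2 : Finset (ℤ × ℤ)) : ℤ :=
  (∑ j ∈ (F1 ∪ F2).image Prod.snd, |colSum F1 j - colSum F2 j|)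
    + ∑ i ∈ (F1 ∪ F2).image Prod.fst, |rowSum F1 i - rowSum F2 i|

/-- `α(F1, F2)`. -/
noncomputable def alpha (F1 F2 : Finset (ℤ × ℤ)) : ℝ :=
  (lineDiff F1 F2 : ℝ) / 2

open scoped symmDiff

/- ------------------ auxiliary lemmas ------------------ -/

private lemma rowSum_insert (s : Finset (ℤ × ℤ)) (p : ℤ × ℤ) (hp : p ∉ s) (t : ℤ) :
    rowSum (insert p s) t = rowSum s t + (if p.1 = t then 1 else 0) := by
  unfold rowSum
  rw [Finset.filter_insert]
  split
  · rw [Finset.card_insert_of_notMem fun h => hp (Finset.mem_of_mem_filter _ h)]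
    push_cast; ring
  · simp

private lemma colSum_insert (s : Finset (ℤ × ℤ)) (p : ℤ × ℤ) (hp : p ∉ s) (t : ℤ) :
    colSum (insert p s) t = colSum s t + (if p.2 = t then 1 else 0) := by
  unfold colSum
  rw [Finset.filter_insert]
  split
  · rw [Finset.card_insert_of_notMem fun h => hp (Finset.mem_of_mem_filter _ h)]
    push_cast; ring
  · simp

/-- No switching component: uniqueness forbids the bad rectangle. -/
private lemma no_switch {A : Finset (ℤ × ℤ)} (hA : uniquelyDetermined A)
    {i i' j j' : ℤ} (h1 : (i, j) ∈ A) (h2 : (i', j') ∈ A)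
    (hii : i ≠ i') (hjj : j ≠ j') (h3 : (i, j') ∉ A) : (i', j) ∈ A := by
  by_contra h4
  set core := (A.erase (i, j)).erase (i', j') with hcore
  have hne : ((i : ℤ), j) ≠ (i', j') := by
    intro h; exact hii (congrArg Prod.fst h)
  have h2c : ((i' : ℤ), j') ∈ A.erase (i, j) := Finset.mem_erase.mpr ⟨Ne.symm hne, h2⟩
  have hc1 : ((i : ℤ), j) ∉ core := by simp [hcore]
  have hc2 : ((i' : ℤ), j') ∉ core := by simp [hcore]
  have hcsub : core ⊆ A := fun p hp =>
    Finset.mem_of_mem_erase (Finset.mem_of_mem_erase hp)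
  have hAeq : A = insert (i, j) (insert (i', j') core) := by
    rw [hcore, Finset.insert_erase h2c, Finset.insert_erase h1]
  have hfresh1 : ((i : ℤ), j) ∉ insert ((i' : ℤ), j') core := by
    simp only [Finset.mem_insert]
    rintro (h | h)
    · exact hne h
    · exact hc1 h
  have hfresh2 : ((i' : ℤ), j) ∉ core := fun h => h4 (hcsub h)
  have hfresh3 : ((i : ℤ), j') ∉ insert ((i' : ℤ), j) core := by
    simp only [Finset.mem_insert]
    rintro (h | h)
    · exact hii (congrArg Prod.fst h)
    · exact h3 (hcsub h)
  set A' := insert ((i : ℤ), j') (insert ((i' : ℤ), j) core) with hA'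
  have hrow : ∀ t, rowSum A' t = rowSum A t := by
    intro t
    rw [hA', hAeq, rowSum_insert _ _ hfresh3 t, rowSum_insert _ _ hfresh2 t,
      rowSum_insert _ _ hfresh1 t, rowSum_insert _ _ hc2 t]
  have hcol : ∀ t, colSum A' t = colSum A t := by
    intro t
    rw [hA', hAeq, colSum_insert _ _ hfresh3 t, colSum_insert _ _ hfresh2 t,
      colSum_insert _ _ hfresh1 t, colSum_insert _ _ hc2 t]
    ring
  have : A' = A := hA A' hrow hcol
  exact h3 (this ▸ Finset.mem_insert_self _ _)

/-- Rows of a uniquely determined set are nested: a longer (or equal) row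
contains every column that a shorter row meets. -/
private lemma mono_row {A : Finset (ℤ × ℤ)} (hA : uniquelyDetermined A)
    {i i' j : ℤ} (hle : rowSum A i ≤ rowSum A i') (hij : (i, j) ∈ A) : (i', j) ∈ A := by
  rcases eq_or_ne i i' with rfl | hii
  · exact hij
  by_contra h4
  have himg : ∀ t : ℤ, (((A.filter fun p => p.1 = t).image Prod.snd).card : ℤ)
      = rowSum A t := by
    intro t
    rw [rowSum]
    congr 1
    apply Finset.card_image_of_injOn
    intro p hp q hq hpq
    have hp1 := (Finset.mem_filter.mp hp).2
    have hq1 := (Finset.mem_filter.mp hq).2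
    exact Prod.ext (hp1.trans hq1.symm) hpq
  have hsub : (A.filter fun p => p.1 = i').image Prod.snd
      ⊆ (A.filter fun p => p.1 = i).image Prod.snd := by
    intro j' hj'
    obtain ⟨p, hp, hp2⟩ := Finset.mem_image.mp hj'
    obtain ⟨hpA, hp1⟩ := Finset.mem_filter.mp hp
    have hpin : ((i' : ℤ), j') ∈ A := by rwa [← hp1, ← hp2, Prod.mk.eta]
    have hjj : j ≠ j' := fun e => h4 (e ▸ hpin)
    have hin : ((i : ℤ), j') ∈ A := by
      by_contra h3
      exact h4 (no_switch hA hij hpin hii hjj h3)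
    exact Finset.mem_image.mpr ⟨(i, j'), Finset.mem_filter.mpr ⟨hin, rfl⟩, rfl⟩
  have hcardle : rowSum A i' ≤ rowSum A i := by
    rw [← himg i, ← himg i']
    exact_mod_cast Finset.card_le_card hsub
  have heqc : ((A.filter fun p => p.1 = i).image Prod.snd).card
      ≤ ((A.filter fun p => p.1 = i').image Prod.snd).card := by
    have : rowSum A i = rowSum A i' := le_antisymm hle hcardle
    have h2 := (himg i).trans (this.trans (himg i').symm)
    exact_mod_cast h2.le
  have heq := Finset.eq_of_subset_of_card_le hsub heqc
  have hjmem : j ∈ (A.filter fun p => p.1 = i).image Prod.snd :=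
    Finset.mem_image.mpr ⟨(i, j), Finset.mem_filter.mpr ⟨hij, rfl⟩, rfl⟩
  rw [← heq] at hjmem
  obtain ⟨p, hp, hp2⟩ := Finset.mem_image.mp hjmem
  obtain ⟨hpA, hp1⟩ := Finset.mem_filter.mp hp
  exact h4 (by rwa [← hp1, ← hp2, Prod.mk.eta])

/-- The set of (distinct) row sums of nonempty rows. -/
private def DrS (A : Finset (ℤ × ℤ)) : Finset ℤ := A.image fun p => rowSum A p.1

private def gF (A : Finset (ℤ × ℤ)) (i : ℤ) : ℤ :=
  (((DrS A).filter fun v => v ≤ rowSum A i).card : ℤ) - 1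

private def hF (A : Finset (ℤ × ℤ)) (j : ℤ) : ℤ :=
  (((A.filter fun p => p.2 = j).image fun p => rowSum A p.1).card : ℤ)

private lemma gF_bounds (A : Finset (ℤ × ℤ)) (i : ℤ) :
    -1 ≤ gF A i ∧ gF A i ≤ ((DrS A).card : ℤ) - 1 := by
  constructor
  · have : (0 : ℤ) ≤ (((DrS A).filter fun v => v ≤ rowSum A i).card : ℤ) := by positivity
    simp only [gF]; omega
  · have := Finset.card_le_card (Finset.filter_subset (fun v => v ≤ rowSum A i) (DrS A))
    simp only [gF]; omega

private lemma hF_bounds (A : Finset (ℤ × ℤ)) (j : ℤ) :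
    0 ≤ hF A j ∧ hF A j ≤ ((DrS A).card : ℤ) := by
  constructor
  · simp only [hF]
    positivity
  · have : ((A.filter fun p => p.2 = j).image fun p => rowSum A p.1) ⊆ DrS A :=
      Finset.image_subset_image (Finset.filter_subset _ _)
    have := Finset.card_le_card this
    simp only [hF, DrS]; exact_mod_cast this

/-- Threshold property, inside. -/
private lemma T1 {A : Finset (ℤ × ℤ)} (hA : uniquelyDetermined A) {i j : ℤ}
    (hij : (i, j) ∈ A) : ((DrS A).card : ℤ) ≤ gF A i + hF A j := by
  have hsplit : ((DrS A).filter fun v => v ≤ rowSum A i).card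
      + ((DrS A).filter fun v => ¬ v ≤ rowSum A i).card = (DrS A).card :=
    Finset.card_filter_add_card_filter_not _
  have hsub : insert (rowSum A i) ((DrS A).filter fun v => ¬ v ≤ rowSum A i)
      ⊆ (A.filter fun p => p.2 = j).image fun p => rowSum A p.1 := by
    intro v hv
    rcases Finset.mem_insert.mp hv with rfl | hv
    · exact Finset.mem_image.mpr ⟨(i, j), Finset.mem_filter.mpr ⟨hij, rfl⟩, rfl⟩
    · obtain ⟨hvD, hvgt⟩ := Finset.mem_filter.mp hv
      obtain ⟨p, hpA, hpv⟩ := Finset.mem_image.mp hvD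
      have hmem : (p.1, j) ∈ A :=
        mono_row hA (by rw [hpv]; exact (lt_of_not_ge hvgt).le) hij
      exact Finset.mem_image.mpr ⟨(p.1, j), Finset.mem_filter.mpr ⟨hmem, rfl⟩, hpv⟩
  have hnotmem : rowSum A i ∉ (DrS A).filter fun v => ¬ v ≤ rowSum A i := by
    simp
  have h1 : ((DrS A).filter fun v => ¬ v ≤ rowSum A i).card + 1
      ≤ ((A.filter fun p => p.2 = j).image fun p => rowSum A p.1).card := by
    rw [← Finset.card_insert_of_notMem hnotmem]
    exact Finset.card_le_card hsub
  simp only [gF, hF]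
  omega

/-- Threshold property, outside. -/
private lemma T2 {A : Finset (ℤ × ℤ)} (hA : uniquelyDetermined A) {i j : ℤ}
    (hij : (i, j) ∉ A) : gF A i + hF A j ≤ ((DrS A).card : ℤ) - 1 := by
  have hdisj : Disjoint ((DrS A).filter fun v => v ≤ rowSum A i)
      ((A.filter fun p => p.2 = j).image fun p => rowSum A p.1) := by
    rw [Finset.disjoint_left]
    intro v hv1 hv2
    obtain ⟨p, hp, hpv⟩ := Finset.mem_image.mp hv2
    obtain ⟨hpA, hpj⟩ := Finset.mem_filter.mp hp
    have hvle : v ≤ rowSum A i := (Finset.mem_filter.mp hv1).2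
    have hle : rowSum A p.1 ≤ rowSum A i := by rw [hpv]; exact hvle
    have hpA2 : (p.1, j) ∈ A := by rwa [← hpj, Prod.mk.eta]
    exact hij (mono_row hA hle hpA2)
  have hsub : ((DrS A).filter fun v => v ≤ rowSum A i)
      ∪ ((A.filter fun p => p.2 = j).image fun p => rowSum A p.1) ⊆ DrS A :=
    Finset.union_subset (Finset.filter_subset _ _)
      (Finset.image_subset_image (Finset.filter_subset _ _))
  have hcards := Finset.card_le_card hsub
  rw [Finset.card_union_of_disjoint hdisj] at hcards
  simp only [gF, hF]
  omega

/-- Sums of a row-function over a set, fiberwise. -/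
private lemma sum_fst_eq {S U : Finset (ℤ × ℤ)} (hS : S ⊆ U) (f : ℤ → ℤ) :
    ∑ p ∈ S, f p.1 = ∑ i ∈ U.image Prod.fst, f i * rowSum S i := by
  rw [← Finset.sum_fiberwise_of_maps_to
    (fun p hp => Finset.mem_image_of_mem Prod.fst (hS hp)) (fun p : ℤ × ℤ => f p.1)]
  refine Finset.sum_congr rfl fun i _ => ?_
  have hcongr : ∑ p ∈ S.filter (fun p => p.1 = i), f p.1
      = ∑ _p ∈ S.filter (fun p => p.1 = i), f i :=
    Finset.sum_congr rfl fun p hp => by rw [(Finset.mem_filter.mp hp).2]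
  rw [hcongr, Finset.sum_const, nsmul_eq_mul, rowSum]
  push_cast
  ring

private lemma sum_snd_eq {S U : Finset (ℤ × ℤ)} (hS : S ⊆ U) (f : ℤ → ℤ) :
    ∑ p ∈ S, f p.2 = ∑ j ∈ U.image Prod.snd, f j * colSum S j := by
  rw [← Finset.sum_fiberwise_of_maps_to
    (fun p hp => Finset.mem_image_of_mem Prod.snd (hS hp)) (fun p : ℤ × ℤ => f p.2)]
  refine Finset.sum_congr rfl fun j _ => ?_
  have hcongr : ∑ p ∈ S.filter (fun p => p.2 = j), f p.2
      = ∑ _p ∈ S.filter (fun p => p.2 = j), f j :=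
    Finset.sum_congr rfl fun p hp => by rw [(Finset.mem_filter.mp hp).2]
  rw [hcongr, Finset.sum_const, nsmul_eq_mul, colSum]
  push_cast
  ring

private lemma sum_rowSum {S U : Finset (ℤ × ℤ)} (hS : S ⊆ U) :
    ∑ i ∈ U.image Prod.fst, rowSum S i = (S.card : ℤ) := by
  have h := sum_fst_eq hS (fun _ => (1 : ℤ))
  simp only [one_mul] at h
  rw [← h]
  simp

private lemma sum_colSum {S U : Finset (ℤ × ℤ)} (hS : S ⊆ U) :
    ∑ j ∈ U.image Prod.snd, colSum S j = (S.card : ℤ) := by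
  have h := sum_snd_eq hS (fun _ => (1 : ℤ))
  simp only [one_mul] at h
  rw [← h]
  simp

/-- A finset of positive integers of cardinality `c` has sum at least `c(c+1)/2`. -/
private lemma sum_distinct_pos (V : Finset ℤ) :
    (∀ v ∈ V, 1 ≤ v) → (V.card : ℤ) * (V.card + 1) ≤ 2 * ∑ v ∈ V, v := by
  induction V using Finset.induction_on_max with
  | empty => simp
  | insert a s ha ih =>
    intro hV
    have h1 : ∀ v ∈ s, 1 ≤ v := fun v hv => hV v (Finset.mem_insert_of_mem hv)
    have has : a ∉ s := fun h => lt_irrefl a (ha a h)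
    have ha1 : (1 : ℤ) ≤ a := hV a (Finset.mem_insert_self _ _)
    have hcard : (s.card : ℤ) + 1 ≤ a := by
      have hsub : s ⊆ Finset.Icc 1 (a - 1) := fun v hv =>
        Finset.mem_Icc.mpr ⟨h1 v hv, by have := ha v hv; omega⟩
      have hc := Finset.card_le_card hsub
      rw [Int.card_Icc] at hc
      omega
    rw [Finset.sum_insert has, Finset.card_insert_of_notMem has]
    have hih := ih h1
    push_cast
    nlinarith [hih, hcard]

private lemma sum_image_le (s : Finset ℤ) (f : ℤ → ℤ) (hf : ∀ i ∈ s, 0 ≤ f i) :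
    ∑ v ∈ s.image f, v ≤ ∑ i ∈ s, f i := by
  rw [← Finset.sum_fiberwise_of_maps_to (fun i hi => Finset.mem_image_of_mem f hi) f]
  apply Finset.sum_le_sum
  intro v hv
  obtain ⟨i0, hi0, hfi0⟩ := Finset.mem_image.mp hv
  have hconst : ∑ i ∈ s.filter (fun i => f i = v), f i
      = ((s.filter (fun i => f i = v)).card : ℤ) * v := by
    rw [Finset.sum_congr rfl (fun i hi => (Finset.mem_filter.mp hi).2),
      Finset.sum_const, nsmul_eq_mul]
  rw [hconst]
  have hv0 : 0 ≤ v := hfi0 ▸ hf i0 hi0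
  have hc : 1 ≤ ((s.filter (fun i => f i = v)).card : ℤ) := by
    have : i0 ∈ s.filter (fun i => f i = v) := Finset.mem_filter.mpr ⟨hi0, hfi0⟩
    exact_mod_cast Finset.card_pos.mpr ⟨i0, this⟩
  nlinarith

/-- the sum of distinct row sums is at most the cardinality. -/
private lemma sum_DrS_le (A : Finset (ℤ × ℤ)) : ∑ v ∈ DrS A, v ≤ (A.card : ℤ) := by
  have himg : DrS A = (A.image Prod.fst).image (fun i => rowSum A i) := by
    rw [DrS, Finset.image_image]
    rfl
  rw [himg]
  calc ∑ v ∈ (A.image Prod.fst).image (fun i => rowSum A i), v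
      ≤ ∑ i ∈ A.image Prod.fst, rowSum A i :=
        sum_image_le _ _ (fun i _ => by rw [rowSum]; positivity)
    _ = (A.card : ℤ) := sum_rowSum (Finset.Subset.refl A)

private lemma DrS_pos (A : Finset (ℤ × ℤ)) : ∀ v ∈ DrS A, 1 ≤ v := by
  intro v hv
  obtain ⟨p, hp, hpv⟩ := Finset.mem_image.mp hv
  have : p ∈ A.filter fun q => q.1 = p.1 := Finset.mem_filter.mpr ⟨hp, rfl⟩
  have hc : 1 ≤ ((A.filter fun q => q.1 = p.1).card : ℤ) := by
    exact_mod_cast Finset.card_pos.mpr ⟨p, this⟩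
  rw [← hpv, rowSum]
  exact hc

/-- If `F1` is uniquely determined and `|F1| = |F2|`, then with `α = α(F1, F2)` we have
`|F1 △ F2| ≤ 2α·√(2|F1|)`. -/
theorem symmDiff_card_le_weak (F1 F2 : Finset (ℤ × ℤ))
    (hF1 : uniquelyDetermined F1) (hcard : F1.card = F2.card) :
    ((F1 ∆ F2).card : ℝ) ≤ 2 * alpha F1 F2 * Real.sqrt (2 * F1.card) := by
  classical
  set d : ℤ := ((DrS F1).card : ℤ) with hd
  set L : ℤ := lineDiff F1 F2 with hL
  set w : ℤ × ℤ → ℤ := fun p => gF F1 p.1 + hF F1 p.2 with hw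
  set m : ℕ := (F1 \ F2).card with hm
  have hmm : (F2 \ F1).card = m := (Finset.card_sdiff_comm hcard).symm
  -- Φ decomposition
  have hsplit1 : ∑ p ∈ F1, w p = ∑ p ∈ F1 \ F2, w p + ∑ p ∈ F1 ∩ F2, w p := by
    rw [← Finset.sum_sdiff Finset.inter_subset_left, Finset.sdiff_inter_self_left]
  have hsplit2 : ∑ p ∈ F2, w p = ∑ p ∈ F2 \ F1, w p + ∑ p ∈ F1 ∩ F2, w p := by
    rw [← Finset.sum_sdiff Finset.inter_subset_right]
    congr 1
    rw [Finset.sdiff_inter_self_right]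
  -- lower bound on Φ F1 - Φ F2
  have hlow1 : (m : ℤ) * d ≤ ∑ p ∈ F1 \ F2, w p := by
    rw [hm]
    calc ((F1 \ F2).card : ℤ) * d = ∑ _p ∈ F1 \ F2, d := by
          rw [Finset.sum_const, nsmul_eq_mul]
      _ ≤ ∑ p ∈ F1 \ F2, w p := by
          apply Finset.sum_le_sum
          intro p hp
          have hpA : p ∈ F1 := (Finset.mem_sdiff.mp hp).1
          have : ((p.1 : ℤ), p.2) ∈ F1 := by rwa [Prod.mk.eta]
          exact T1 hF1 this
  have hlow2 : ∑ p ∈ F2 \ F1, w p ≤ (m : ℤ) * (d - 1) := by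
    calc ∑ p ∈ F2 \ F1, w p ≤ ∑ _p ∈ F2 \ F1, (d - 1) := by
          apply Finset.sum_le_sum
          intro p hp
          have hpA : p ∉ F1 := (Finset.mem_sdiff.mp hp).2
          have : ((p.1 : ℤ), p.2) ∉ F1 := by rwa [Prod.mk.eta]
          exact T2 hF1 this
      _ = (m : ℤ) * (d - 1) := by rw [Finset.sum_const, nsmul_eq_mul, hmm]
  have hlow : (m : ℤ) ≤ ∑ p ∈ F1, w p - ∑ p ∈ F2, w p := by
    rw [hsplit1, hsplit2]
    nlinarith [hlow1, hlow2]
  -- upper bound on 2(Φ F1 - Φ F2)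
  have hexp1 : ∀ S : Finset (ℤ × ℤ), S ⊆ F1 ∪ F2 →
      ∑ p ∈ S, w p = (∑ i ∈ (F1 ∪ F2).image Prod.fst, gF F1 i * rowSum S i)
        + ∑ j ∈ (F1 ∪ F2).image Prod.snd, hF F1 j * colSum S j := by
    intro S hS
    rw [hw]
    rw [Finset.sum_add_distrib, sum_fst_eq hS (gF F1), sum_snd_eq hS (hF F1)]
  have hPhiDiff : ∑ p ∈ F1, w p - ∑ p ∈ F2, w p
      = (∑ i ∈ (F1 ∪ F2).image Prod.fst, gF F1 i * (rowSum F1 i - rowSum F2 i))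
        + ∑ j ∈ (F1 ∪ F2).image Prod.snd, hF F1 j * (colSum F1 j - colSum F2 j) := by
    rw [hexp1 F1 Finset.subset_union_left, hexp1 F2 Finset.subset_union_right]
    have e1 : ∑ i ∈ (F1 ∪ F2).image Prod.fst, gF F1 i * (rowSum F1 i - rowSum F2 i)
        = (∑ i ∈ (F1 ∪ F2).image Prod.fst, gF F1 i * rowSum F1 i)
          - ∑ i ∈ (F1 ∪ F2).image Prod.fst, gF F1 i * rowSum F2 i := by
      rw [← Finset.sum_sub_distrib]
      exact Finset.sum_congr rfl fun i _ => by ring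
    have e2 : ∑ j ∈ (F1 ∪ F2).image Prod.snd, hF F1 j * (colSum F1 j - colSum F2 j)
        = (∑ j ∈ (F1 ∪ F2).image Prod.snd, hF F1 j * colSum F1 j)
          - ∑ j ∈ (F1 ∪ F2).image Prod.snd, hF F1 j * colSum F2 j := by
      rw [← Finset.sum_sub_distrib]
      exact Finset.sum_congr rfl fun j _ => by ring
    rw [e1, e2]
    ring
  have hrow0 : ∑ i ∈ (F1 ∪ F2).image Prod.fst, (rowSum F1 i - rowSum F2 i) = 0 := by
    rw [Finset.sum_sub_distrib, sum_rowSum Finset.subset_union_left,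
      sum_rowSum Finset.subset_union_right, hcard]
    ring
  have hcol0 : ∑ j ∈ (F1 ∪ F2).image Prod.snd, (colSum F1 j - colSum F2 j) = 0 := by
    rw [Finset.sum_sub_distrib, sum_colSum Finset.subset_union_left,
      sum_colSum Finset.subset_union_right, hcard]
    ring
  have hupr : 2 * ∑ i ∈ (F1 ∪ F2).image Prod.fst, gF F1 i * (rowSum F1 i - rowSum F2 i)
      ≤ d * ∑ i ∈ (F1 ∪ F2).image Prod.fst, |rowSum F1 i - rowSum F2 i| := by
    have key : ∀ i ∈ (F1 ∪ F2).image Prod.fst,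
        (2 * gF F1 i - (d - 2)) * (rowSum F1 i - rowSum F2 i)
          ≤ d * |rowSum F1 i - rowSum F2 i| := by
      intro i _
      obtain ⟨hg1, hg2⟩ := gF_bounds F1 i
      have habs : |2 * gF F1 i - (d - 2)| ≤ d := by
        rw [abs_le]; constructor <;> [omega; omega]
      calc (2 * gF F1 i - (d - 2)) * (rowSum F1 i - rowSum F2 i)
          ≤ |(2 * gF F1 i - (d - 2)) * (rowSum F1 i - rowSum F2 i)| := le_abs_self _
        _ = |2 * gF F1 i - (d - 2)| * |rowSum F1 i - rowSum F2 i| := abs_mul _ _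
        _ ≤ d * |rowSum F1 i - rowSum F2 i| :=
            mul_le_mul_of_nonneg_right habs (abs_nonneg _)
    calc 2 * ∑ i ∈ (F1 ∪ F2).image Prod.fst, gF F1 i * (rowSum F1 i - rowSum F2 i)
        = (∑ i ∈ (F1 ∪ F2).image Prod.fst,
            (2 * gF F1 i - (d - 2)) * (rowSum F1 i - rowSum F2 i))
          + (d - 2) * ∑ i ∈ (F1 ∪ F2).image Prod.fst, (rowSum F1 i - rowSum F2 i) := by
          rw [Finset.mul_sum, Finset.mul_sum, ← Finset.sum_add_distrib]
          exact Finset.sum_congr rfl fun i _ => by ring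
      _ = ∑ i ∈ (F1 ∪ F2).image Prod.fst,
            (2 * gF F1 i - (d - 2)) * (rowSum F1 i - rowSum F2 i) := by
          rw [hrow0]; ring
      _ ≤ ∑ i ∈ (F1 ∪ F2).image Prod.fst, d * |rowSum F1 i - rowSum F2 i| :=
          Finset.sum_le_sum key
      _ = d * ∑ i ∈ (F1 ∪ F2).image Prod.fst, |rowSum F1 i - rowSum F2 i| :=
          (Finset.mul_sum _ _ _).symm
  have hupc : 2 * ∑ j ∈ (F1 ∪ F2).image Prod.snd, hF F1 j * (colSum F1 j - colSum F2 j)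
      ≤ d * ∑ j ∈ (F1 ∪ F2).image Prod.snd, |colSum F1 j - colSum F2 j| := by
    have key : ∀ j ∈ (F1 ∪ F2).image Prod.snd,
        (2 * hF F1 j - d) * (colSum F1 j - colSum F2 j)
          ≤ d * |colSum F1 j - colSum F2 j| := by
      intro j _
      obtain ⟨hh1, hh2⟩ := hF_bounds F1 j
      have habs : |2 * hF F1 j - d| ≤ d := by
        rw [abs_le]; constructor <;> [omega; omega]
      calc (2 * hF F1 j - d) * (colSum F1 j - colSum F2 j)
          ≤ |(2 * hF F1 j - d) * (colSum F1 j - colSum F2 j)| := le_abs_self _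
        _ = |2 * hF F1 j - d| * |colSum F1 j - colSum F2 j| := abs_mul _ _
        _ ≤ d * |colSum F1 j - colSum F2 j| :=
            mul_le_mul_of_nonneg_right habs (abs_nonneg _)
    calc 2 * ∑ j ∈ (F1 ∪ F2).image Prod.snd, hF F1 j * (colSum F1 j - colSum F2 j)
        = (∑ j ∈ (F1 ∪ F2).image Prod.snd,
            (2 * hF F1 j - d) * (colSum F1 j - colSum F2 j))
          + d * ∑ j ∈ (F1 ∪ F2).image Prod.snd, (colSum F1 j - colSum F2 j) := by
          rw [Finset.mul_sum, Finset.mul_sum, ← Finset.sum_add_distrib]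
          exact Finset.sum_congr rfl fun j _ => by ring
      _ = ∑ j ∈ (F1 ∪ F2).image Prod.snd,
            (2 * hF F1 j - d) * (colSum F1 j - colSum F2 j) := by
          rw [hcol0]; ring
      _ ≤ ∑ j ∈ (F1 ∪ F2).image Prod.snd, d * |colSum F1 j - colSum F2 j| :=
          Finset.sum_le_sum key
      _ = d * ∑ j ∈ (F1 ∪ F2).image Prod.snd, |colSum F1 j - colSum F2 j| :=
          (Finset.mul_sum _ _ _).symm
  have hkey : 2 * (m : ℤ) ≤ d * L := by
    have h1 : 2 * ((m : ℤ)) ≤ 2 * (∑ p ∈ F1, w p - ∑ p ∈ F2, w p) := by linarith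
    rw [hPhiDiff] at h1
    rw [hL, lineDiff]
    calc 2 * (m : ℤ) ≤ 2 * ((∑ i ∈ (F1 ∪ F2).image Prod.fst,
            gF F1 i * (rowSum F1 i - rowSum F2 i))
          + ∑ j ∈ (F1 ∪ F2).image Prod.snd, hF F1 j * (colSum F1 j - colSum F2 j)) := h1
      _ ≤ d * ((∑ j ∈ (F1 ∪ F2).image Prod.snd, |colSum F1 j - colSum F2 j|)
          + ∑ i ∈ (F1 ∪ F2).image Prod.fst, |rowSum F1 i - rowSum F2 i|) := by
          nlinarith [hupr, hupc]
  -- d^2 ≤ 2 n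
  have hd2 : d * d ≤ 2 * (F1.card : ℤ) := by
    have h1 := sum_distinct_pos (DrS F1) (DrS_pos F1)
    have h2 := sum_DrS_le F1
    have hd0 : (0 : ℤ) ≤ d := by rw [hd]; positivity
    nlinarith
  -- symmetric difference cardinality
  have hsd : ((F1 ∆ F2).card : ℤ) = 2 * (m : ℤ) := by
    rw [symmDiff_def, Finset.sup_eq_union,
      Finset.card_union_of_disjoint disjoint_sdiff_sdiff, hm, hmm]
    push_cast
    ring
  -- nonnegativity of lineDiff
  have hL0 : (0 : ℤ) ≤ L := by
    rw [hL, lineDiff]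
    apply add_nonneg <;> exact Finset.sum_nonneg fun x _ => abs_nonneg _
  -- assemble over ℝ
  have hdR : (d : ℝ) ≤ Real.sqrt (2 * (F1.card : ℝ)) := by
    rw [Real.le_sqrt (by exact_mod_cast (by positivity : (0:ℤ) ≤ d)) (by positivity)]
    rw [sq]
    exact_mod_cast hd2
  have hcast : ((F1 ∆ F2).card : ℝ) ≤ (d : ℝ) * (L : ℝ) := by
    have : ((F1 ∆ F2).card : ℤ) ≤ d * L := by rw [hsd]; exact hkey
    exact_mod_cast this
  have hstep : (d : ℝ) * (L : ℝ) ≤ Real.sqrt (2 * (F1.card : ℝ)) * (L : ℝ) :=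
    mul_le_mul_of_nonneg_right hdR (by exact_mod_cast hL0)
  calc ((F1 ∆ F2).card : ℝ) ≤ (d : ℝ) * (L : ℝ) := hcast
    _ ≤ Real.sqrt (2 * (F1.card : ℝ)) * (L : ℝ) := hstep
    _ = 2 * alpha F1 F2 * Real.sqrt (2 * F1.card) := by
        rw [alpha, hL]
        push_cast
        ring
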